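/- Let H be a normal subgroup of π₁(X, x₀) and let X be H-SLT at x₀. Then X is homotopically path Hausdorff relative to H if and only if X is homotopically Hausdorff relative to H. -/

import Mathlib

open Set TopologicalSpace unitInterval

universe u

namespace SLTF

attribute [local instance] Path.Homotopic.setoid

variable {X : Type u} [TopologicalSpace X]

/-- The homotopy class of a loop as an element of the fundamental group. -/
noncomputable def fl {x : X} (γ : Path x x) : FundamentalGroup X x :=
  @FundamentalGroup.fromPath X _ x ⟦γ⟧

/-- Multiplication of fundamental-group elements in path-concatenation order:
`pmul a b` is the class of "`a` followed by `b`". -/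
noncomputable def pmul {x : X} (a b : FundamentalGroup X x) : FundamentalGroup X x :=
  @FundamentalGroup.fromPath X _ x
    (Path.Homotopic.Quotient.trans (@FundamentalGroup.toPath X _ x a)
      (@FundamentalGroup.toPath X _ x b))

/-- A path in `X` starting at the base point `x`, recorded together with its end point. -/
structure PPath (X : Type u) [TopologicalSpace X] (x : X) where
  target : X
  path : Path x target

/-- Two paths starting at `x` are identified when they have the same end point and the
class of `α ⬝ β⁻¹` satisfies the predicate `P` (e.g. membership in a subgroup `H`). -/
def HRel (x : X) (P : Path x x → Prop) (α β : PPath X x) : Prop :=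
  ∃ h : α.target = β.target, P (α.path.trans ((β.path.cast rfl h).symm))

/-- The set `X̃` of `P`-equivalence classes of paths starting at `x`. -/
def Xtilde (x : X) (P : Path x x → Prop) : Type u := Quot (HRel x P)

/-- The class of a path in `X̃`. -/
def mkX (x : X) (P : Path x x → Prop) (α : PPath X x) : Xtilde x P := Quot.mk _ α

/-- The basic whisker-open set `([α], U)`: all classes of prolongations of `α` by a path in `U`. -/
def whBasic (x : X) (P : Path x x → Prop) (α : PPath X x) (U : Set X) : Set (Xtilde x P) :=
  { q | ∃ (y : X) (β : Path α.target y), range ⇑β ⊆ U ∧ q = mkX x P ⟨y, α.path.trans β⟩ }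

/-- The whisker topology on `X̃`, generated by the sets `([α], U)` for `U` an open
neighbourhood of the end point of `α`. -/
instance whTop (x : X) (P : Path x x → Prop) : TopologicalSpace (Xtilde x P) :=
  generateFrom
    { S | ∃ (α : PPath X x) (U : Set X), IsOpen U ∧ α.target ∈ U ∧ S = whBasic x P α U }

/-- The endpoint projection `p : X̃ → X`. -/
def endpt (x : X) (P : Path x x → Prop) : Xtilde x P → X :=
  Quot.lift (fun α => α.target) (fun _ _ h => h.elim fun e _ => e)

/-- The space of paths in `X` starting at `x`, with the compact-open topology. -/
def PSp (X : Type u) [TopologicalSpace X] (x : X) : Type u := { f : C(I, X) // f 0 = x }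

instance (x : X) : TopologicalSpace (PSp X x) := instTopologicalSpaceSubtype

/-- The natural surjection from the path space onto `X̃`. -/
def toXt (x : X) (P : Path x x → Prop) : PSp X x → Xtilde x P :=
  fun f => mkX x P ⟨f.1 1, ⟨f.1, f.2, rfl⟩⟩

/-- The quotient of the compact-open topology on `X̃`. -/
def topTop (x : X) (P : Path x x → Prop) : TopologicalSpace (Xtilde x P) :=
  coinduced (toXt x P) inferInstance

/-- Membership in a subgroup `H`, as a predicate on loops. -/
noncomputable def loopMem (x : X) (H : Subgroup (FundamentalGroup X x)) : Path x x → Prop :=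
  fun γ => fl γ ∈ H

/-- `X̃_H`, the classes of paths starting at `x₀` modulo `H`. -/
abbrev XtildeH (x₀ : X) (H : Subgroup (FundamentalGroup X x₀)) : Type u :=
  Xtilde x₀ (loopMem x₀ H)

/-- The fiber of the endpoint projection over `y`, with the subspace (whisker) topology. -/
abbrev Fib (x : X) (P : Path x x → Prop) (y : X) : Type u :=
  { q : Xtilde x P // endpt x P q = y }

/-- The class in the fiber over `y` of a path from `x` to `y`. -/
def mkFib (x : X) (P : Path x x → Prop) {y : X} (δ : Path x y) : Fib x P y :=
  ⟨mkX x P ⟨y, δ⟩, rfl⟩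

/-- The whisker topology on the fundamental group `π₁(X, x)`: basic neighbourhoods of `a`
are the sets `{a ⋆ [γ] : γ a loop in U at x}` for `U` an open neighbourhood of `x`. -/
noncomputable def whPi1 (x : X) : TopologicalSpace (FundamentalGroup X x) :=
  generateFrom
    { S | ∃ (a : FundamentalGroup X x) (U : Set X), IsOpen U ∧ x ∈ U ∧
        S = { b | ∃ γ : Path x x, range ⇑γ ⊆ U ∧ b = pmul a (fl γ) } }

/-- The quotient topology on `π₁(X, x)` induced from the loop space with the
compact-open topology. -/
noncomputable def qtopPi1 (x : X) : TopologicalSpace (FundamentalGroup X x) :=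
  coinduced (fun γ : Path x x => fl γ) inferInstance

/-- `X` is `H`-SLT at `x₀`. -/
noncomputable def IsHSLTAt (x₀ : X) (H : Subgroup (FundamentalGroup X x₀)) : Prop :=
  ∀ (y : X) (α : Path x₀ y) (U : Set X), IsOpen U → x₀ ∈ U →
    ∃ V : Set X, IsOpen V ∧ y ∈ V ∧
      ∀ β : Path y y, range ⇑β ⊆ V →
        ∃ γ : Path x₀ x₀, range ⇑γ ⊆ U ∧
          fl ((α.trans (β.trans α.symm)).trans γ.symm) ∈ H

/-- `X` is SLT at `x`. -/
def IsSLTAt (X : Type u) [TopologicalSpace X] (x : X) : Prop :=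
  ∀ (y : X) (α : Path x y) (U : Set X), IsOpen U → x ∈ U →
    ∃ V : Set X, IsOpen V ∧ y ∈ V ∧
      ∀ β : Path y y, range ⇑β ⊆ V →
        ∃ γ : Path x x, range ⇑γ ⊆ U ∧ (α.trans (β.trans α.symm)).Homotopic γ

/-- `X` is an SLT space. -/
def IsSLT (X : Type u) [TopologicalSpace X] : Prop := ∀ x : X, IsSLTAt X x

/-- `α` (a path from `x` to `y`) is an `H`-SLT path: for every path `lam` from `x₀` to `x`
and open `U ∋ x` there is an open `V ∋ y` such that every loop `β` in `V` at `y` transfers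
to a loop `γ` in `U` at `x` with `[α ⋆ β ⋆ α⁻¹ ⋆ γ⁻¹] ∈ [lam⁻¹ H lam]`, i.e.
`[lam ⋆ (α ⋆ β ⋆ α⁻¹ ⋆ γ⁻¹) ⋆ lam⁻¹] ∈ H`. -/
noncomputable def IsHSLTPath (x₀ : X) (H : Subgroup (FundamentalGroup X x₀)) {x y : X}
    (α : Path x y) : Prop :=
  ∀ (lam : Path x₀ x) (U : Set X), IsOpen U → x ∈ U →
    ∃ V : Set X, IsOpen V ∧ y ∈ V ∧
      ∀ β : Path y y, range ⇑β ⊆ V →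
        ∃ γ : Path x x, range ⇑γ ⊆ U ∧
          fl (lam.trans ((((α.trans (β.trans α.symm)).trans γ.symm)).trans lam.symm)) ∈ H

/-- `X` is an `H`-SLT space: for every `x` and every path `lam` from `x₀` to `x`, `X` is
`[lam⁻¹ H lam]`-SLT at `x`. -/
noncomputable def IsHSLTSpace (x₀ : X) (H : Subgroup (FundamentalGroup X x₀)) : Prop :=
  ∀ (x y : X) (α : Path x y), IsHSLTPath x₀ H α

/-- Membership in the conjugate subgroup `[lam⁻¹ H lam]` of `π₁(X, x)`,
as a predicate on loops at `x`. -/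
noncomputable def conjMem (x₀ : X) (H : Subgroup (FundamentalGroup X x₀)) {x : X}
    (lam : Path x₀ x) : Path x x → Prop :=
  fun δ => fl (lam.trans (δ.trans lam.symm)) ∈ H

/-- `X` is homotopically Hausdorff relative to `H`. -/
noncomputable def HomHausdorffRel (x₀ : X) (H : Subgroup (FundamentalGroup X x₀)) : Prop :=
  ∀ (y : X) (α : Path x₀ y) (g : FundamentalGroup X x₀), g ∉ H →
    ∃ U : Set X, IsOpen U ∧ y ∈ U ∧
      ∀ γ : Path y y, range ⇑γ ⊆ U →
        ¬ ∃ h ∈ H, fl (α.trans (γ.trans α.symm)) = pmul h g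

/-- `X` is homotopically path Hausdorff relative to `H`. -/
noncomputable def HomPathHausdorffRel (x₀ : X) (H : Subgroup (FundamentalGroup X x₀)) : Prop :=
  ∀ (y : X) (α β : Path x₀ y), fl (α.trans β.symm) ∉ H →
    ∃ (n : ℕ) (t : Fin (n + 1) → I) (U : Fin n → Set X),
      t 0 = 0 ∧ t (Fin.last n) = 1 ∧ StrictMono t ∧
      (∀ i : Fin n, IsOpen (U i)) ∧
      (∀ i : Fin n, ⇑α '' Set.Icc (t i.castSucc) (t i.succ) ⊆ U i) ∧
      ∀ γ : Path x₀ y,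
        (∀ i : Fin n, ⇑γ '' Set.Icc (t i.castSucc) (t i.succ) ⊆ U i) →
        (∀ i : Fin (n + 1), γ (t i) = α (t i)) →
        fl (γ.trans β.symm) ∉ H

/-- The endpoint projection `p : X̃ → X` (with the whisker topology on `X̃`) has the
unique path lifting property. -/
def UPLP (x : X) (P : Path x x → Prop) : Prop :=
  ∀ g₁ g₂ : C(I, Xtilde x P), g₁ 0 = g₂ 0 →
    (∀ t, endpt x P (g₁ t) = endpt x P (g₂ t)) → g₁ = g₂

/-- A semicovering map: a local homeomorphism with (continuous) unique lifting of paths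
and of homotopies. -/
structure IsSemicovering {Y : Type u} [TopologicalSpace Y] (p : Y → X) : Prop where
  localHomeo : IsLocalHomeomorph p
  pathLift : ∀ (y : Y) (γ : C(I, X)), γ 0 = p y →
    ∃! γh : C(I, Y), γh 0 = y ∧ ∀ t, p (γh t) = γ t
  contPathLift : ∀ y : Y, ∃ L : { γ : C(I, X) // γ 0 = p y } → C(I, Y),
    Continuous L ∧ ∀ γ, (L γ) 0 = y ∧ ∀ t, p ((L γ) t) = (γ : C(I, X)) t
  homotopyLift : ∀ (y : Y) (Φ : C(I × I, X)), Φ (0, 0) = p y →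
    ∃! Φh : C(I × I, Y), Φh (0, 0) = y ∧ ∀ z, p (Φh z) = Φ z
  contHomotopyLift : ∀ y : Y, ∃ L : { Φ : C(I × I, X) // Φ (0, 0) = p y } → C(I × I, Y),
    Continuous L ∧ ∀ Φ, (L Φ) (0, 0) = y ∧ ∀ z, p ((L Φ) z) = (Φ : C(I × I, X)) z

/-- An `lpc₀`-covering map with `p₊π₁(Y, ·) = H`: a map which is equivalent, as a map
over `X`, to the endpoint projection `p_H : X̃_H → X` having the unique path lifting
property (with `Y` path connected and locally path connected). -/
structure IsLpc0Covering {Y : Type u} [TopologicalSpace Y] (p : Y → X) (x₀ : X)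
    (H : Subgroup (FundamentalGroup X x₀)) : Prop where
  pathConnected : PathConnectedSpace Y
  locPathConnected : LocPathConnectedSpace Y
  uplp : UPLP x₀ (loopMem x₀ H)
  equiv : ∃ φ : Y ≃ₜ XtildeH x₀ H, ∀ y, endpt x₀ (loopMem x₀ H) (φ y) = p y

/-- The homomorphism induced by `p` on fundamental groups, as a function. -/
noncomputable def pStar {Y : Type u} [TopologicalSpace Y] (p : C(Y, X)) (y₀ : Y) :
    FundamentalGroup Y y₀ → FundamentalGroup X (p y₀) :=
  fun g => @FundamentalGroup.fromPath X _ (p y₀)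
    (Path.Homotopic.Quotient.map (@FundamentalGroup.toPath Y _ y₀ g) p)

/-! ### Auxiliary infrastructure -/

open CategoryTheory

section Aux

lemma aext {x : X} {a b : FundamentalGroup X x}
    (h : (a : FundamentalGroupoid.mk x ⟶ FundamentalGroupoid.mk x) = b) : a = b := h

/-- Homotopy class of a path as a morphism in the fundamental groupoid. -/
def hq {a b : X} (p : Path a b) :
    (FundamentalGroupoid.mk a : FundamentalGroupoid X) ⟶ FundamentalGroupoid.mk b := ⟦p⟧

lemma hq_trans {a b c : X} (p : Path a b) (q : Path b c) : hq (p.trans q) = hq p ≫ hq q :=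
  Path.Homotopic.Quotient.mk_trans p q

lemma hq_symm {a b : X} (p : Path a b) : hq p.symm = CategoryTheory.inv (hq p) := by
  rw [← Groupoid.inv_eq_inv]; rfl

lemma hq_refl (a : X) : hq (Path.refl a) = 𝟙 (FundamentalGroupoid.mk a) := rfl

lemma hq_sound {a b : X} {p q : Path a b} (h : p.Homotopic q) : hq p = hq q :=
  Quotient.sound h

lemma hq_eq_of_coe {a b : X} {p q : Path a b} (h : ⇑p = ⇑q) : hq p = hq q := by
  congr 1; ext t; exact congrFun h t

lemma fl_hom {x : X} (p : Path x x) : (fl p : FundamentalGroupoid.mk x ⟶ _) = hq p := rfl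

lemma fl_ext {x : X} {p q : Path x x} (h : hq p = hq q) : fl p = fl q :=
  aext h

lemma mul_hom' {x : X} (a b : FundamentalGroup X x) : ((a * b : FundamentalGroup X x) : FundamentalGroupoid.mk x ⟶ _) =
    (b : FundamentalGroupoid.mk x ⟶ _) ≫ a := rfl

lemma inv_hom' {x : X} (a : FundamentalGroup X x) :
    ((a⁻¹ : FundamentalGroup X x) : FundamentalGroupoid.mk x ⟶ FundamentalGroupoid.mk x) =
      CategoryTheory.inv (a : FundamentalGroupoid.mk x ⟶ FundamentalGroupoid.mk x) := by
  rw [← Groupoid.inv_eq_inv]; rfl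

lemma pmul_def {x : X} (a b : FundamentalGroup X x) : pmul a b = b * a :=
  aext rfl

lemma fl_trans {x : X} (p q : Path x x) : fl (p.trans q) = fl q * fl p :=
  aext (Path.Homotopic.Quotient.mk_trans p q)

lemma fl_refl (x : X) : fl (Path.refl x) = 1 :=
  aext rfl

lemma fl_symm {x : X} (p : Path x x) : fl p.symm = (fl p)⁻¹ := by
  apply aext
  rw [inv_hom']
  exact hq_symm p

lemma fl_sound {x : X} {p q : Path x x} (h : p.Homotopic q) : fl p = fl q :=
  aext (Quotient.sound h)

lemma exists_fl {x : X} (g : FundamentalGroup X x) : ∃ ℓ : Path x x, fl ℓ = g := by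
  refine ⟨(@FundamentalGroup.toPath X _ x g).out, aext ?_⟩
  show (⟦_⟧ : Path.Homotopic.Quotient x x) = _
  exact Quotient.out_eq _

/-- `fl` of a loop of the form `p ⋆ r⁻¹`, split through an intermediate path `q`. -/
lemma fl_split {x z : X} (p q r : Path x z) :
    fl (p.trans r.symm) = fl (q.trans r.symm) * fl (p.trans q.symm) := by
  apply aext
  show hq (p.trans r.symm) = hq (p.trans q.symm) ≫ hq (q.trans r.symm)
  rw [hq_trans, hq_trans, hq_trans, hq_symm q, hq_symm r]
  simp

lemma fl_rev {x z : X} (p q : Path x z) :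
    fl (q.trans p.symm) = (fl (p.trans q.symm))⁻¹ := by
  apply aext
  rw [inv_hom']
  show hq (q.trans p.symm) = CategoryTheory.inv (hq (p.trans q.symm))
  rw [hq_trans, hq_trans, hq_symm p, hq_symm q]
  simp

end Aux

section Subpath

variable {x y : X} (γ : Path x y)

lemma sp_aux_source {a b : I} (hab : a ≤ b) {u : X} (hu : γ a = u) :
    u = γ.extend (min ↑a ↑b) := by
  rw [min_eq_left (by exact_mod_cast hab : (a : ℝ) ≤ b), γ.extend_extends' a, hu]

lemma sp_aux_target {b : I} {v : X} (hv : γ b = v) : v = γ.extend ↑b := by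
  rw [γ.extend_extends' b, hv]

/-- The subpath of `γ` from time `a` to time `b`, cast to prescribed endpoints. -/
noncomputable def sp {a b : I} (hab : a ≤ b) {u v : X} (hu : γ a = u) (hv : γ b = v) : Path u v :=
  (γ.truncate a b).cast (sp_aux_source γ hab hu) (sp_aux_target γ hv)

lemma sp_coe {a b : I} (hab : a ≤ b) {u v : X} (hu : γ a = u) (hv : γ b = v) :
    ⇑(sp γ hab hu hv) = fun t : I => γ.extend (min (max ↑t ↑a) ↑b) := by
  rw [sp, Path.cast_coe]; rfl

lemma sp_range {a b : I} (hab : a ≤ b) {u v : X} (hu : γ a = u) (hv : γ b = v) :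
    Set.range ⇑(sp γ hab hu hv) ⊆ ⇑γ '' Set.Icc a b := by
  rw [sp_coe]
  rintro _ ⟨t, rfl⟩
  have h1 : (0 : ℝ) ≤ min (max ↑t ↑a) ↑b := le_min (le_max_of_le_right a.2.1) b.2.1
  have h2 : min (max (t : ℝ) ↑a) ↑b ≤ 1 := min_le_of_right_le b.2.2
  refine ⟨⟨min (max ↑t ↑a) ↑b, h1, h2⟩, ⟨?_, ?_⟩, (γ.extend_apply ⟨h1, h2⟩).symm⟩
  · exact Subtype.mk_le_mk.mpr (le_min (le_max_right _ _) (by exact_mod_cast hab))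
  · exact Subtype.mk_le_mk.mpr (min_le_right _ _)

lemma sp_last {b : I} (hb : (b : ℝ) = 1) (h0b : (0:I) ≤ b) {u v : X} (hu : γ 0 = u)
    (hv : γ b = v) (hx : u = x) (hy : v = y) : sp γ h0b hu hv = γ.cast hx hy := by
  ext t
  rw [Path.cast_coe, sp_coe]
  show γ.extend (min (max ↑t ↑(0:I)) ↑b) = γ t
  rw [Set.Icc.coe_zero, hb, max_eq_left t.2.1, min_eq_left t.2.2, γ.extend_extends' t]

lemma sp_full (h : (0:I) ≤ 1) (hu : γ 0 = x) (hv : γ 1 = y) : sp γ h hu hv = γ := by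
  have := sp_last γ (b := 1) (by norm_num) h hu hv rfl rfl
  rw [this]
  ext t
  rw [Path.cast_coe]

lemma sp_of_eq {a b : I} (hab : a ≤ b) (hba : (b:ℝ) ≤ (a:ℝ)) {u : X} (hu : γ a = u)
    (hv : γ b = u) : sp γ hab hu hv = Path.refl u := by
  have hb : (a : ℝ) = (b : ℝ) := le_antisymm (by exact_mod_cast hab) hba
  ext t
  rw [sp_coe]
  show γ.extend (min (max ↑t ↑a) ↑b) = u
  rcases le_total (t : ℝ) (a : ℝ) with h | h
  · rw [max_eq_right h, hb, min_self, γ.extend_extends' b, hv]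
  · rw [max_eq_left h, min_eq_right (hb ▸ h), γ.extend_extends' b, hv]

lemma sp_trans {a b c : I} (hab : a ≤ b) (hbc : b ≤ c) {u v w : X} (hu : γ a = u)
    (hv : γ b = v) (hw : γ c = w) :
    ((sp γ hab hu hv).trans (sp γ hbc hv hw)).Homotopic (sp γ (hab.trans hbc) hu hw) := by
  have hab' : (a : ℝ) ≤ b := by exact_mod_cast hab
  have hbc' : (b : ℝ) ≤ c := by exact_mod_cast hbc
  set f : I → I := fun t =>
    ⟨if (t : ℝ) ≤ 1 / 2 then min (2 * t) ↑b else max (2 * t - 1) ↑b, by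
      split_ifs with h
      · constructor
        · exact le_min (by nlinarith [t.2.1]) b.2.1
        · exact min_le_of_right_le b.2.2
      · constructor
        · exact le_max_of_le_right b.2.1
        · exact max_le (by nlinarith [t.2.2]) b.2.2⟩ with hf
  have hfc : Continuous f := by
    apply Continuous.subtype_mk
    apply Continuous.if_le
    · fun_prop
    · fun_prop
    · fun_prop
    · fun_prop
    · intro t ht
      rw [ht]
      norm_num [min_eq_right b.2.2, max_eq_right b.2.1]
  have hf0 : f 0 = 0 := by
    apply Subtype.ext
    show (if ((0:I) : ℝ) ≤ 1 / 2 then _ else _) = _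
    rw [if_pos (by norm_num)]
    norm_num [b.2.1]
  have hf1 : f 1 = 1 := by
    apply Subtype.ext
    show (if ((1:I) : ℝ) ≤ 1 / 2 then _ else _) = _
    rw [if_neg (by norm_num)]
    norm_num [b.2.2]
  have key : (sp γ hab hu hv).trans (sp γ hbc hv hw)
      = (sp γ (hab.trans hbc) hu hw).reparam f hfc hf0 hf1 := by
    ext t
    rw [Path.trans_apply, Path.coe_reparam]
    have hval : ∀ s : I, sp γ (hab.trans hbc) hu hw s = γ.extend (min (max ↑s ↑a) ↑c) :=
      fun s => congrFun (sp_coe γ (hab.trans hbc) hu hw) s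
    split_ifs with h
    · show sp γ hab hu hv _ = _
      rw [congrFun (sp_coe γ hab hu hv) _, Function.comp_apply, hval]
      show γ.extend (min (max (2 * (t:ℝ)) ↑a) ↑b)
          = γ.extend (min (max ↑(f t) ↑a) ↑c)
      congr 1
      have hft : ((f t : I) : ℝ) = min (2 * (t:ℝ)) ↑b := by rw [hf]; simp only [if_pos h]
      rw [hft]
      rcases le_total (2 * (t:ℝ)) (b : ℝ) with h2 | h2
      · rw [min_eq_left h2, min_eq_left (max_le h2 hab'),
          min_eq_left ((max_le h2 hab').trans hbc')]
      · rw [min_eq_right h2, max_eq_left hab', min_eq_left hbc',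
          min_eq_right (le_max_of_le_left h2)]
    · show sp γ hbc hv hw _ = _
      rw [congrFun (sp_coe γ hbc hv hw) _, Function.comp_apply, hval]
      show γ.extend (min (max (2 * (t:ℝ) - 1) ↑b) ↑c)
          = γ.extend (min (max ↑(f t) ↑a) ↑c)
      congr 1
      have hft : ((f t : I) : ℝ) = max (2 * (t:ℝ) - 1) ↑b := by rw [hf]; simp only [if_neg h]
      rw [hft, max_eq_left (hab'.trans (le_max_right _ _))]
  rw [key]
  exact (Path.Homotopic.symm ⟨Path.Homotopy.reparam _ f hfc hf0 hf1⟩)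

end Subpath

section MoreAux

variable {x₀ : X}

lemma fl_congr_left {z : X} {p q : Path x₀ z} (h : p.Homotopic q) (r : Path x₀ z) :
    fl (p.trans r.symm) = fl (q.trans r.symm) := by
  apply aext
  show hq (p.trans r.symm) = hq (q.trans r.symm)
  rw [hq_trans, hq_trans, hq_sound h]

lemma fl_trans_assoc {a b : X} (p : Path x₀ a) (q : Path a b) (r : Path b x₀) :
    fl ((p.trans q).trans r) = fl (p.trans (q.trans r)) := by
  apply aext
  show hq ((p.trans q).trans r) = hq (p.trans (q.trans r))
  rw [hq_trans, hq_trans, hq_trans, hq_trans, Category.assoc]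

lemma fl_cast_pair {z y : X} (hz : z = y) (p q : Path x₀ y) :
    fl ((p.cast rfl hz).trans (q.cast rfl hz).symm) = fl (p.trans q.symm) := by
  subst hz
  have h1 : p.cast rfl rfl = p := by ext t; rw [Path.cast_coe]
  have h2 : q.cast rfl rfl = q := by ext t; rw [Path.cast_coe]
  rw [h1, h2]

/-- `fl` of a conjugation of a trivial-type loop by `refl`. -/
lemma fl_refl_conj (δ : Path x₀ x₀) :
    fl ((Path.refl x₀).trans (δ.trans (Path.refl x₀).symm)) = fl δ := by
  apply aext
  show hq ((Path.refl x₀).trans (δ.trans (Path.refl x₀).symm)) = hq δ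
  rw [hq_trans, hq_trans, hq_symm, hq_refl]
  simp

end MoreAux

section EasyDir

variable {x₀ : X} {H : Subgroup (FundamentalGroup X x₀)}

lemma easy_dir (hph : HomPathHausdorffRel x₀ H) : HomHausdorffRel x₀ H := by
  intro y α g hg
  obtain ⟨ℓ, hℓ⟩ := exists_fl g
  set β : Path x₀ y := ℓ.trans α with hβdef
  have key1 : fl (α.trans β.symm) = g⁻¹ := by
    rw [← hℓ]
    apply aext
    rw [inv_hom']
    show hq (α.trans (ℓ.trans α).symm) = CategoryTheory.inv (hq ℓ)
    rw [hq_trans, hq_symm, hq_trans]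
    simp
  have hne : fl (α.trans β.symm) ∉ H := by
    rw [key1]
    intro hmem
    exact hg (by simpa using H.inv_mem hmem)
  obtain ⟨n, t, U, ht0, htl, hmono, hUopen, hαU, hkey⟩ := hph y α β hne
  have hn : 0 < n := by
    by_contra h
    push_neg at h
    interval_cases n
    have : (0 : I) = 1 := by rw [← ht0, ← htl]; rfl
    exact zero_ne_one (congrArg Subtype.val this)
  set j : Fin n := ⟨n - 1, by omega⟩ with hjdef
  have hjsucc : j.succ = Fin.last n := by
    apply Fin.ext
    simp [hjdef, Fin.last]
    omega
  set T : I := t j.castSucc with hTdef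
  have hT01 : (0:ℝ) ≤ (T:ℝ) ∧ (T:ℝ) ≤ 1 := T.2
  have htjsucc : t j.succ = 1 := by rw [hjsucc, htl]
  have hTlt : (T : ℝ) < 1 := by
    have := hmono (Fin.castSucc_lt_succ (i := j))
    rw [htjsucc] at this
    exact_mod_cast this
  have hTle : T ≤ t j.succ := le_of_lt (hmono (Fin.castSucc_lt_succ (i := j)))
  have hyU : y ∈ U j := by
    have h1 : α (t j.succ) ∈ ⇑α '' Set.Icc (t j.castSucc) (t j.succ) :=
      ⟨t j.succ, ⟨hTle, le_refl _⟩, rfl⟩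
    have h2 := hαU j h1
    rw [htjsucc] at h2
    rwa [α.target] at h2
  refine ⟨U j, hUopen j, hyU, ?_⟩
  rintro γ₀ hγ₀range ⟨h, hh, heq⟩
  -- Build the test path ρ
  have h0T : (0 : I) ≤ T := unitInterval.nonneg'
  have hT1 : T ≤ (1 : I) := unitInterval.le_one'
  set Q : Path x₀ (α T) := sp α h0T α.source rfl with hQdef
  set A2 : Path (α T) y := sp α hT1 rfl α.target with hA2def
  set p : Path (α T) y := A2.trans γ₀ with hpdef
  have h1T : (0:ℝ) < 1 - T := by linarith
  set fr : I → ℝ := fun s => if (s:ℝ) ≤ T then (s:ℝ)/2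
      else (T:ℝ)/2 + (((s:ℝ) - T)/(1 - T)) * (1 - (T:ℝ)/2) with hfrdef
  have hfr_mem : ∀ s : I, fr s ∈ I := by
    intro s
    rw [hfrdef]
    dsimp only
    split_ifs with hs
    · constructor
      · have := s.2.1; linarith
      · have := s.2.2; linarith
    · push_neg at hs
      have hr0 : 0 ≤ ((s:ℝ) - T)/(1 - T) := div_nonneg (by linarith) (le_of_lt h1T)
      have hr1 : ((s:ℝ) - T)/(1 - T) ≤ 1 := (div_le_one h1T).mpr (by have := s.2.2; linarith)
      constructor
      · nlinarith [hT01.1, hT01.2]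
      · nlinarith [hT01.1, hT01.2]
  set f : I → I := fun s => ⟨fr s, hfr_mem s⟩ with hfdef
  have hfc : Continuous f := by
    apply Continuous.subtype_mk
    rw [hfrdef]
    apply Continuous.if_le
    · fun_prop
    · fun_prop
    · exact continuous_subtype_val
    · exact continuous_const
    · intro s hs
      rw [hs]
      simp
  have hf0 : f 0 = 0 := by
    apply Subtype.ext
    show fr 0 = 0
    rw [hfrdef]
    simp only [Set.Icc.coe_zero]
    rw [if_pos hT01.1]
    norm_num
  have hf1 : f 1 = 1 := by
    apply Subtype.ext
    show fr 1 = 1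
    rw [hfrdef]
    simp only [Set.Icc.coe_one]
    rw [if_neg (not_le.mpr hTlt)]
    rw [div_self (ne_of_gt h1T)]
    ring
  set ρ : Path x₀ y := (Q.trans p).reparam f hfc hf0 hf1 with hρdef
  have hρ_eval : ∀ s : I, ρ s = (Q.trans p) (f s) := fun s => rfl
  have hfr_low : ∀ s : I, (s:ℝ) ≤ T → fr s = (s:ℝ)/2 := by
    intro s hs; rw [hfrdef]; exact if_pos hs
  -- evaluation of ρ below T
  have hρlow : ∀ s : I, (s:ℝ) ≤ (T:ℝ) → ρ s = α s := by
    intro s hs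
    rw [hρ_eval, Path.trans_apply]
    have hfs : ((f s : I) : ℝ) = (s:ℝ)/2 := hfr_low s hs
    rw [dif_pos (by rw [hfs]; have := s.2.2; linarith)]
    rw [congrFun (sp_coe α h0T α.source rfl) _]
    show α.extend (min (max (2 * ((f s : I):ℝ)) 0) T) = α s
    rw [hfs]
    have : 2 * ((s:ℝ)/2) = (s:ℝ) := by ring
    rw [this, max_eq_left s.2.1, min_eq_left hs, α.extend_extends' s]
  -- node condition
  have hnode : ∀ i : Fin (n+1), ρ (t i) = α (t i) := by
    intro i
    rcases eq_or_lt_of_le (Fin.le_last i) with hi | hi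
    · have hti : t i = 1 := by rw [hi, htl]
      rw [hti, ρ.target, α.target]
    · have hile : i ≤ j.castSucc := by
        rw [Fin.le_def]
        have := Fin.lt_def.mp hi
        simp only [Fin.val_last] at this
        simp [hjdef]
        omega
      exact hρlow (t i) (by exact_mod_cast hmono.monotone hile)
  -- segment condition
  have hseg : ∀ i : Fin n, ⇑ρ '' Set.Icc (t i.castSucc) (t i.succ) ⊆ U i := by
    intro i
    rcases eq_or_ne i j with hij | hij
    · subst hij
      rintro _ ⟨s, hsmem, rfl⟩
      rcases le_or_gt (s:ℝ) (T:ℝ) with hs | hs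
      · rw [hρlow s hs]
        exact hαU j ⟨s, ⟨hsmem.1, le_trans (by exact_mod_cast hs) hTle⟩, rfl⟩
      · rw [hρ_eval, Path.trans_apply]
        have hfs : ((f s : I) : ℝ) = (T:ℝ)/2 + (((s:ℝ) - T)/(1 - T)) * (1 - (T:ℝ)/2) := by
          show fr s = _
          rw [hfrdef]
          exact if_neg (not_le.mpr hs)
        have hfsT : (T:ℝ) ≤ 2 * ((f s : I) : ℝ) := by
          rw [hfs]
          have hr0 : 0 ≤ ((s:ℝ) - T)/(1 - T) := div_nonneg (by linarith) (le_of_lt h1T)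
          nlinarith [hT01.2]
        split_ifs with hhalf
        · rw [congrFun (sp_coe α h0T α.source rfl) _]
          show α.extend (min (max (2 * ((f s : I):ℝ)) 0) T) ∈ U j
          rw [min_eq_right (le_max_of_le_left hfsT), α.extend_extends' T]
          exact hαU j ⟨T, ⟨le_refl _, hTle⟩, rfl⟩
        · refine (?_ : Set.range ⇑p ⊆ U j) (Set.mem_range_self _)
          rw [hpdef, Path.trans_range]
          apply Set.union_subset
          · intro z hz
            obtain ⟨u, humem, rfl⟩ := sp_range α hT1 rfl α.target hz
            refine hαU j ⟨u, ⟨humem.1, ?_⟩, rfl⟩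
            rw [htjsucc]
            exact humem.2
          · exact hγ₀range
    · -- i ≠ j, so the whole segment is below T
      have hisucc : i.succ ≤ j.castSucc := by
        rw [Fin.le_def]
        simp [hjdef]
        have h1 : i.val < n := i.2
        have h2 : i.val ≠ n - 1 := fun hc => hij (Fin.ext (by simp [hjdef, hc]))
        omega
      rintro _ ⟨s, hsmem, rfl⟩
      have hsT : (s : ℝ) ≤ T := by
        exact_mod_cast le_trans hsmem.2 (hmono.monotone hisucc)
      rw [hρlow s hsT]
      exact hαU i ⟨s, hsmem, rfl⟩
  have hnotH := hkey ρ hseg hnode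
  -- but fl (ρ.trans β.symm) ∈ H : contradiction
  apply hnotH
  have hQA : (Q.trans A2).Homotopic (sp α (h0T.trans hT1) α.source α.target) :=
    sp_trans α h0T hT1 α.source rfl α.target
  rw [sp_full α (h0T.trans hT1) α.source α.target] at hQA
  have hQp : hq (Q.trans p) = hq (α.trans γ₀) := by
    rw [hpdef, hq_trans, hq_trans, hq_trans, ← Category.assoc, ← hq_trans, hq_sound hQA]
  have e1 : fl (ρ.trans β.symm) = fl ((Q.trans p).trans β.symm) :=
    fl_congr_left (Path.Homotopic.symm ⟨Path.Homotopy.reparam _ f hfc hf0 hf1⟩) β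
  have e2 : fl ((Q.trans p).trans β.symm) = fl ((α.trans γ₀).trans β.symm) := by
    apply aext
    show hq ((Q.trans p).trans β.symm) = hq ((α.trans γ₀).trans β.symm)
    rw [hq_trans (Q.trans p) β.symm, hq_trans (α.trans γ₀) β.symm, hQp]
  have e3 : fl ((α.trans γ₀).trans β.symm)
      = fl (α.trans β.symm) * fl ((α.trans γ₀).trans α.symm) := fl_split _ α β
  have e4 : fl ((α.trans γ₀).trans α.symm) = fl (α.trans (γ₀.trans α.symm)) :=
    fl_trans_assoc α γ₀ α.symm
  rw [e1, e2, e3, e4, heq, pmul_def, key1]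
  have : g⁻¹ * (g * h) = h := by group
  rw [this]
  exact hh

end EasyDir

section HardDir

variable {x₀ : X} {H : Subgroup (FundamentalGroup X x₀)}

set_option maxHeartbeats 1000000 in
lemma hard_dir (hH : H.Normal) (hslt : IsHSLTAt x₀ H) (hhh : HomHausdorffRel x₀ H) :
    HomPathHausdorffRel x₀ H := by
  intro y α β hne
  set g := fl (α.trans β.symm) with hgdef
  obtain ⟨U₀, hU₀o, hU₀x, hU₀⟩ := hhh x₀ (Path.refl x₀) g hne
  have hU₀' : ∀ δ : Path x₀ x₀, Set.range ⇑δ ⊆ U₀ → ∀ h ∈ H, fl δ ≠ g * h := by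
    intro δ hδ h hmem hc
    exact hU₀ δ hδ ⟨h, hmem, by rw [fl_refl_conj, hc, pmul_def]⟩
  have hbot : ∀ s : I, (0:I) ≤ s := fun s => unitInterval.nonneg'
  set c : (s : I) → Path x₀ (α s) := fun s => sp α (hbot s) α.source rfl with hcdef
  have hslt' : ∀ s : I, ∃ V : Set X, IsOpen V ∧ α s ∈ V ∧
      ∀ βl : Path (α s) (α s), Set.range ⇑βl ⊆ V →
        ∃ γl : Path x₀ x₀, Set.range ⇑γl ⊆ U₀ ∧
          fl (((c s).trans (βl.trans (c s).symm)).trans γl.symm) ∈ H := by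
    intro s
    obtain ⟨V, hVo, hVs, hV⟩ := hslt (α s) (c s) U₀ hU₀o hU₀x
    exact ⟨V, hVo, hVs, hV⟩
  choose V hVo hVs hV using hslt'
  have hrad : ∀ s : I, ∃ r, 0 < r ∧ ∀ u : I, dist u s < r → α u ∈ V s := by
    intro s
    have hop : IsOpen (⇑α ⁻¹' V s) := (hVo s).preimage α.continuous
    rw [Metric.isOpen_iff] at hop
    obtain ⟨r, hr, hball⟩ := hop s (hVs s)
    exact ⟨r, hr, fun u hu => hball hu⟩
  choose r hr hrV using hrad
  obtain ⟨δL, hδL, hLeb⟩ := lebesgue_number_lemma_of_metric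
    (isCompact_univ : IsCompact (Set.univ : Set I))
    (fun s : I => Metric.isOpen_ball)
    (fun u _ => Set.mem_iUnion.mpr ⟨u, Metric.mem_ball_self (hr u)⟩)
  obtain ⟨N0, hN0⟩ := exists_nat_one_div_lt hδL
  set N := N0 + 1 with hNdef
  have hNpos : (0:ℝ) < (N:ℝ) := by positivity
  have hmemI : ∀ i : Fin (N+1), ((i:ℕ):ℝ)/(N:ℝ) ∈ I := by
    intro i
    constructor
    · positivity
    · rw [div_le_one hNpos]
      have : (i:ℕ) ≤ N := by omega
      exact_mod_cast this
  set t : Fin (N+1) → I := fun i => ⟨((i:ℕ):ℝ)/(N:ℝ), hmemI i⟩ with htdef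
  have ht0 : t 0 = 0 := by
    apply Subtype.ext
    show ((0:ℕ):ℝ)/(N:ℝ) = 0
    simp
  have htl : t (Fin.last N) = 1 := by
    apply Subtype.ext
    show ((N:ℕ):ℝ)/(N:ℝ) = 1
    rw [div_self (ne_of_gt hNpos)]
  have hmono : StrictMono t := by
    intro i j hij
    rw [Subtype.mk_lt_mk]
    gcongr
    exact_mod_cast hij
  -- the centers of small balls
  have hsc : ∀ i : Fin N, ∃ s : I,
      Set.Icc (t i.castSucc) (t i.succ) ⊆ Metric.ball s (r s) := by
    intro i
    obtain ⟨s, hs⟩ := hLeb (t i.castSucc) trivial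
    refine ⟨s, fun u hu => hs ?_⟩
    rw [Metric.mem_ball, Subtype.dist_eq, Real.dist_eq]
    have h1 : (t i.castSucc : ℝ) ≤ u := by exact_mod_cast hu.1
    have h2 : (u:ℝ) ≤ (t i.succ : ℝ) := by exact_mod_cast hu.2
    have hcs : (t i.castSucc : ℝ) = ((i:ℕ):ℝ)/(N:ℝ) := by
      show ((((i.castSucc):Fin (N+1)):ℕ):ℝ)/(N:ℝ) = _
      norm_num
    have hsu : (t i.succ : ℝ) = (((i:ℕ):ℝ)+1)/(N:ℝ) := by
      show ((((i.succ):Fin (N+1)):ℕ):ℝ)/(N:ℝ) = _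
      rw [Fin.val_succ]
      push_cast
      ring
    rw [hcs] at h1
    rw [hsu] at h2
    have hsplitd : (((i:ℕ):ℝ)+1)/(N:ℝ) = ((i:ℕ):ℝ)/(N:ℝ) + 1/(N:ℝ) := by ring
    have hstep : (u:ℝ) - ((i:ℕ):ℝ)/(N:ℝ) ≤ 1/(N:ℝ) := by
      rw [hsplitd] at h2
      linarith
    have hlt : 1/(N:ℝ) < δL := by
      have : ((N:ℕ):ℝ) = (N0:ℝ) + 1 := by rw [hNdef]; push_cast; ring
      rw [this]
      exact hN0
    rw [abs_sub_comm, abs_of_nonpos (by linarith)]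
    linarith
  choose sc hscb using hsc
  refine ⟨N, t, fun i => V (sc i), ht0, htl, hmono, fun i => hVo (sc i), ?_, ?_⟩
  · rintro i _ ⟨u, hu, rfl⟩
    exact hrV (sc i) u (Metric.mem_ball.mp (hscb i hu))
  intro ρ hseg hnode hcon
  -- the inductive claim
  have main : ∀ k : ℕ, ∀ hk : k ≤ N,
      ∃ (δl : Path x₀ x₀) (h' : FundamentalGroup X x₀), Set.range ⇑δl ⊆ U₀ ∧ h' ∈ H ∧
        fl ((sp ρ (hbot (t ⟨k, by omega⟩)) ρ.source (hnode ⟨k, by omega⟩)).trans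
            (sp α (hbot (t ⟨k, by omega⟩)) α.source rfl).symm) = fl δl * h' := by
    intro k
    induction k with
    | zero =>
      intro hk
      refine ⟨Path.refl x₀, 1, by rw [Path.refl_range]; simpa using hU₀x, one_mem H, ?_⟩
      rw [fl_refl, one_mul]
      have hzf : (⟨0, by omega⟩ : Fin (N+1)) = 0 := by
        apply Fin.ext
        simp
      have ht00 : ((t ⟨0, by omega⟩ : I) : ℝ) = 0 := by rw [hzf, ht0]; rfl
      have hco : ∀ τ : I, min (max (τ:ℝ) ↑(0:I)) ↑(t (⟨0, by omega⟩ : Fin (N+1))) = 0 := by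
        intro τ
        rw [ht00, Set.Icc.coe_zero]
        exact min_eq_right (le_max_right _ _)
      have hRS : sp ρ (hbot (t ⟨0, by omega⟩)) ρ.source (hnode ⟨0, by omega⟩)
          = sp α (hbot (t ⟨0, by omega⟩)) α.source rfl := by
        ext τ
        rw [congrFun (sp_coe ρ _ _ _) τ, congrFun (sp_coe α _ _ _) τ]
        show ρ.extend _ = α.extend _
        rw [hco τ]
        rw [ρ.extend_zero, α.extend_zero]
      rw [hRS]
      have h0 : (Path.refl x₀).Homotopic ((sp α (hbot (t ⟨0, by omega⟩)) α.source rfl).trans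
          (sp α (hbot (t ⟨0, by omega⟩)) α.source rfl).symm) :=
        ⟨Path.Homotopy.reflTransSymm _⟩
      rw [← fl_sound h0, fl_refl]
    | succ k ih =>
      intro hk
      have hkN : k ≤ N := by omega
      set kf : Fin (N+1) := ⟨k, by omega⟩ with hkf
      set kf1 : Fin (N+1) := ⟨k+1, by omega⟩ with hkf1
      set i : Fin N := ⟨k, by omega⟩ with hidef
      have hicast : i.castSucc = kf := rfl
      have hisucc : i.succ = kf1 := rfl
      have hab : t kf ≤ t kf1 := hmono.monotone (by rw [hkf, hkf1, Fin.mk_le_mk]; omega)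
      set Rk := sp ρ (hbot (t kf)) ρ.source (hnode kf) with hRk
      set Ck := sp α (hbot (t kf)) α.source rfl with hCk
      set Rk1 := sp ρ (hbot (t kf1)) ρ.source (hnode kf1) with hRk1
      set Ck1 := sp α (hbot (t kf1)) α.source rfl with hCk1
      set ρseg := sp ρ hab (hnode kf) (hnode kf1) with hρseg
      set αseg := sp α hab rfl rfl with hαseg
      set d := ρseg.trans αseg.symm with hd
      -- ranges
      have hαIcc : ⇑α '' Set.Icc (t kf) (t kf1) ⊆ V (sc i) := by
        rintro _ ⟨u, hu, rfl⟩
        exact hrV (sc i) u (Metric.mem_ball.mp (hscb i hu))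
      have hd_range : Set.range ⇑d ⊆ V (sc i) := by
        rw [hd, Path.trans_range]
        apply Set.union_subset
        · exact fun z hz => hseg i (sp_range ρ hab (hnode kf) (hnode kf1) hz)
        · rw [Path.symm_range]
          exact fun z hz => hαIcc (sp_range α hab rfl rfl hz)
      -- the connecting path e
      have hscmem : ∀ u : I, u ∈ Set.Icc (t kf) (t kf1) → α u ∈ V (sc i) := by
        intro u hu
        exact hrV (sc i) u (Metric.mem_ball.mp (hscb i hu))
      have hballmem : ∀ u : I, dist u (sc i) ≤ dist (t kf) (sc i) → α u ∈ V (sc i) := by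
        intro u hu
        apply hrV (sc i) u
        calc dist u (sc i) ≤ dist (t kf) (sc i) := hu
          _ < r (sc i) := Metric.mem_ball.mp (hscb i ⟨le_refl _, hab⟩)
      have he : ∃ e : Path (α (sc i)) (α (t kf)), Set.range ⇑e ⊆ V (sc i) ∧
          hq ((c (sc i)).trans e) = hq (c (t kf)) := by
        rcases le_total (sc i) (t kf) with hsa | has
        · refine ⟨sp α hsa rfl rfl, ?_, ?_⟩
          · intro z hz
            obtain ⟨u, hu, rfl⟩ := sp_range α hsa rfl rfl hz
            apply hballmem u
            rw [Subtype.dist_eq, Real.dist_eq, Subtype.dist_eq, Real.dist_eq]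
            have h1 : ((sc i : I) : ℝ) ≤ u := by exact_mod_cast hu.1
            have h2 : (u:ℝ) ≤ (t kf : ℝ) := by exact_mod_cast hu.2
            have h3 : ((sc i : I) : ℝ) ≤ (t kf : ℝ) := by exact_mod_cast hsa
            rw [abs_of_nonneg (by linarith), abs_of_nonneg (by linarith)]
            linarith
          · exact hq_sound (sp_trans α (hbot (sc i)) hsa α.source rfl rfl)
        · refine ⟨(sp α has rfl rfl).symm, ?_, ?_⟩
          · rw [Path.symm_range]
            intro z hz
            obtain ⟨u, hu, rfl⟩ := sp_range α has rfl rfl hz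
            apply hballmem u
            rw [Subtype.dist_eq, Real.dist_eq, Subtype.dist_eq, Real.dist_eq]
            have h1 : (t kf : ℝ) ≤ u := by exact_mod_cast hu.1
            have h2 : (u:ℝ) ≤ ((sc i : I) : ℝ) := by exact_mod_cast hu.2
            rw [abs_of_nonpos (by linarith), abs_of_nonpos (by linarith)]
            linarith
          · have h1 : hq ((c (t kf)).trans (sp α has rfl rfl)) = hq (c (sc i)) :=
              hq_sound (sp_trans α (hbot (t kf)) has α.source rfl rfl)
            rw [hq_trans] at h1
            rw [hq_trans, hq_symm, ← h1]
            simp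
      obtain ⟨e, he_range, he_q⟩ := he
      have hβl_range : Set.range ⇑(e.trans (d.trans e.symm)) ⊆ V (sc i) := by
        rw [Path.trans_range, Path.trans_range, Path.symm_range]
        exact Set.union_subset he_range (Set.union_subset hd_range he_range)
      obtain ⟨γl, hγl_range, hγl_mem⟩ := hV (sc i) (e.trans (d.trans e.symm)) hβl_range
      obtain ⟨δk, hk', hδk_range, hδkH, hδk_eq⟩ := ih hkN
      rw [hq_trans] at he_q
      have hF : fl ((c (t kf)).trans (d.trans (c (t kf)).symm))
          = fl γl * fl (((c (sc i)).trans ((e.trans (d.trans e.symm)).trans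
              (c (sc i)).symm)).trans γl.symm) := by
        apply aext
        show hq ((c (t kf)).trans (d.trans (c (t kf)).symm))
            = hq ((((c (sc i)).trans ((e.trans (d.trans e.symm)).trans
                (c (sc i)).symm))).trans γl.symm) ≫ hq γl
        rw [hq_trans (c (t kf)) (d.trans (c (t kf)).symm),
          hq_trans d ((c (t kf)).symm), hq_symm (c (t kf)), ← he_q,
          hq_trans _ γl.symm, hq_symm γl,
          hq_trans (c (sc i)) ((e.trans (d.trans e.symm)).trans (c (sc i)).symm),
          hq_trans _ ((c (sc i)).symm), hq_symm (c (sc i)),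
          hq_trans e (d.trans e.symm), hq_trans d e.symm, hq_symm e]
        simp
      have h1q : hq (sp ρ (hbot (t kf1)) ρ.source (hnode kf1))
          = hq (sp ρ (hbot (t kf)) ρ.source (hnode kf)) ≫ hq ρseg := by
        rw [← hq_trans]
        exact (hq_sound (sp_trans ρ (hbot (t kf)) hab ρ.source (hnode kf) (hnode kf1))).symm
      have h2q : hq (sp α (hbot (t kf1)) α.source rfl)
          = hq (c (t kf)) ≫ hq αseg := by
        rw [← hq_trans]
        exact (hq_sound (sp_trans α (hbot (t kf)) hab α.source rfl rfl)).symm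
      have hstep : fl ((sp ρ (hbot (t kf1)) ρ.source (hnode kf1)).trans
            (sp α (hbot (t kf1)) α.source rfl).symm)
          = fl ((c (t kf)).trans (d.trans (c (t kf)).symm))
            * fl ((sp ρ (hbot (t kf)) ρ.source (hnode kf)).trans
                (sp α (hbot (t kf)) α.source rfl).symm) := by
        apply aext
        show hq ((sp ρ (hbot (t kf1)) ρ.source (hnode kf1)).trans
              (sp α (hbot (t kf1)) α.source rfl).symm)
            = hq ((sp ρ (hbot (t kf)) ρ.source (hnode kf)).trans
                (sp α (hbot (t kf)) α.source rfl).symm)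
              ≫ hq ((c (t kf)).trans (d.trans (c (t kf)).symm))
        rw [hq_trans _ ((sp α (hbot (t kf1)) α.source rfl).symm),
          hq_symm (sp α (hbot (t kf1)) α.source rfl), h1q, h2q,
          hq_trans _ ((sp α (hbot (t kf)) α.source rfl).symm),
          hq_symm (sp α (hbot (t kf)) α.source rfl),
          hq_trans (c (t kf)) (d.trans (c (t kf)).symm),
          hq_trans d ((c (t kf)).symm), hq_symm (c (t kf)), hd,
          hq_trans ρseg αseg.symm, hq_symm αseg]
        show _ = (hq (sp ρ (hbot (t kf)) ρ.source (hnode kf))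
            ≫ CategoryTheory.inv (hq (c (t kf))))
            ≫ hq (c (t kf)) ≫ (hq ρseg ≫ CategoryTheory.inv (hq αseg))
              ≫ CategoryTheory.inv (hq (c (t kf)))
        simp
      refine ⟨δk.trans γl,
        (fl δk)⁻¹ * fl (((c (sc i)).trans ((e.trans (d.trans e.symm)).trans
            (c (sc i)).symm)).trans γl.symm) * fl δk * hk', ?_, ?_, ?_⟩
      · rw [Path.trans_range]
        exact Set.union_subset hδk_range hγl_range
      · exact H.mul_mem (hH.conj_mem' _ hγl_mem (fl δk)) hδkH
      · rw [hstep, hF, hδk_eq, fl_trans, fl_trans, fl_symm]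
        group
  -- conclusion of the induction
  obtain ⟨δN, hN', hδN_range, hN'H, hfin⟩ := main N (le_refl N)
  have hfin' : fl ((sp ρ (hbot (t ⟨N, by omega⟩)) ρ.source (hnode ⟨N, by omega⟩)).trans
      (sp α (hbot (t ⟨N, by omega⟩)) α.source rfl).symm) = fl δN * hN' := hfin
  have hlastc : ((t ⟨N, by omega⟩ : I) : ℝ) = 1 := by
    have hl : (⟨N, by omega⟩ : Fin (N+1)) = Fin.last N := rfl
    rw [hl, htl]
    exact Set.Icc.coe_one
  have hyN : α (t ⟨N, by omega⟩) = y := by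
    have h1 : (t ⟨N, by omega⟩ : I) = 1 := Subtype.ext hlastc
    rw [h1]
    exact α.target
  rw [sp_last ρ hlastc _ _ _ rfl hyN, sp_last α hlastc _ _ _ rfl hyN,
    fl_cast_pair hyN ρ α] at hfin'
  have hsplit := fl_split ρ β α
  have hrev : fl (β.trans α.symm) = g⁻¹ := by rw [hgdef]; exact fl_rev α β
  rw [hsplit, hrev] at hfin'
  have hδNval : fl δN = g⁻¹ * fl (ρ.trans β.symm) * hN'⁻¹ := by
    rw [hfin']
    group
  refine hU₀' δN.symm (by rw [Path.symm_range]; exact hδN_range)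
    (g⁻¹ * (hN' * (fl (ρ.trans β.symm))⁻¹) * g)
    (hH.conj_mem' _ (H.mul_mem hN'H (H.inv_mem hcon)) g) ?_
  rw [fl_symm, hδNval]
  group

end HardDir

/-- Let `H` be a normal subgroup of `π₁(X, x₀)` and let `X` be `H`-SLT at
`x₀`. Then `X` is homotopically path Hausdorff relative to `H` if and only if `X` is
homotopically Hausdorff relative to `H`. -/
theorem statement2 {X : Type u} [TopologicalSpace X] [PathConnectedSpace X] (x₀ : X)
    (H : Subgroup (FundamentalGroup X x₀)) (hH : H.Normal) (hslt : IsHSLTAt x₀ H) :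
    HomPathHausdorffRel x₀ H ↔ HomHausdorffRel x₀ H := by
  exact ⟨easy_dir, hard_dir hH hslt⟩

end SLTF
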